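/- arXiv:1401.4025 — 2 statements merged into one kernel-verified Lean document; each statement's English description precedes it below -/
import Mathlib

section
/- Let A be a nondeterministic parity tree automaton, t a tree, ρ a run of A on t, v a vertex, and ρ' an accepting run of A on a tree r with ρ'(ε) = ρ(v). If ρ is accepting (on t), then the substituted run ρ[ρ'/v] is an accepting run of A on t[r/v]. -/
open Filter Set

/-- An infinite binary tree over alphabet `A`. -/
abbrev Tree' (A : Type) := List Bool → A

/-- Subtree of `t` rooted at vertex `v`. -/
def subtreeAt {A : Type} (t : Tree' A) (v : List Bool) : Tree' A := fun w => t (v ++ w)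

/-- Substitution `t[r/v]`: replace the subtree of `t` at `v` by `r`. -/
def substAt {A : Type} (t r : Tree' A) (v : List Bool) : Tree' A :=
  fun w => if v <+: w then r (w.drop v.length) else t w

/-- A nondeterministic parity tree automaton. -/
structure NPA (Q A : Type) where
  q0 : Q
  Δ : Set (Q × Q × A × Q)
  Ω : Q → ℕ

/-- `ρ` is a run of `M` on `t`. `false` = left, `true` = right. -/
def NPA.IsRun {Q A : Type} (M : NPA Q A) (t : Tree' A) (ρ : Tree' Q) : Prop :=
  ∀ v : List Bool, (ρ v, ρ (v ++ [false]), t v, ρ (v ++ [true])) ∈ M.Δ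

/-- Length-`n` prefix of an infinite branch, as a vertex. -/
def pref (b : ℕ → Bool) (n : ℕ) : List Bool := (List.range n).map b

/-- `ρ` is an accepting run of `M` on `t`. -/
def NPA.Accepting {Q A : Type} (M : NPA Q A) (t : Tree' A) (ρ : Tree' Q) : Prop :=
  M.IsRun t ρ ∧
    ∀ b : ℕ → Bool, Even (Filter.limsup (fun n => M.Ω (ρ (pref b n))) Filter.atTop)

/-- Accepting run starting from state `q`. -/
def NPA.AcceptingFrom {Q A : Type} (M : NPA Q A) (q : Q) (t : Tree' A) (ρ : Tree' Q) : Prop :=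
  M.Accepting t ρ ∧ ρ [] = q

/-- The language recognised by `M`. -/
def NPA.Lang {Q A : Type} (M : NPA Q A) : Set (Tree' A) :=
  { t | ∃ ρ, M.AcceptingFrom M.q0 t ρ }

/-- `M` is unambiguous. -/
def NPA.Unambiguous {Q A : Type} (M : NPA Q A) : Prop :=
  ∀ (t : Tree' A) (ρ₁ ρ₂ : Tree' Q),
    M.AcceptingFrom M.q0 t ρ₁ → M.AcceptingFrom M.q0 t ρ₂ → ρ₁ = ρ₂

/-- `(q, a)` is productive. -/
def NPA.Productive {Q A : Type} (M : NPA Q A) (q : Q) (a : A) : Prop :=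
  ∃ (t : Tree' A) (ρ : Tree' Q) (v : List Bool),
    M.AcceptingFrom M.q0 t ρ ∧ ρ v = q ∧ t v = a

/-- The transition `δ` starts from the pair `(q, a)`. -/
def NPA.StartsFrom {Q A : Type} (M : NPA Q A) (δ : Q × Q × A × Q) (q : Q) (a : A) : Prop :=
  δ ∈ M.Δ ∧ δ.1 = q ∧ δ.2.2.1 = a

/-- `L_δ`: trees with an accepting run using transition `δ` at the root. -/
def NPA.Ldelta {Q A : Type} (M : NPA Q A) (δ : Q × Q × A × Q) : Set (Tree' A) :=
  { t | ∃ ρ : Tree' Q, M.Accepting t ρ ∧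
      ρ [] = δ.1 ∧ ρ [false] = δ.2.1 ∧ t [] = δ.2.2.1 ∧ ρ [true] = δ.2.2.2 }

lemma pref_succ (b : ℕ → Bool) (n : ℕ) : pref b (n + 1) = pref b n ++ [b n] := by
  simp [pref, List.range_succ]

lemma pref_take (b : ℕ → Bool) {k n : ℕ} (h : k ≤ n) :
    (pref b n).take k = pref b k := by
  simp [pref, ← List.map_take, List.take_range, Nat.min_eq_left h]

lemma pref_length (b : ℕ → Bool) (n : ℕ) : (pref b n).length = n := by simp [pref]

lemma pref_add (b : ℕ → Bool) (L m : ℕ) :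
    pref b (L + m) = pref b L ++ pref (fun k => b (k + L)) m := by
  induction m with
  | zero => simp [pref]
  | succ m ih =>
      rw [← Nat.add_assoc, pref_succ, ih, pref_succ, List.append_assoc]
      simp [Nat.add_comm]

theorem stmt2 {Q A : Type} (M : NPA Q A) (t r : Tree' A) (ρ ρ' : Tree' Q) (v : List Bool)
    (hρ : M.Accepting t ρ) (hρ' : M.Accepting r ρ') (hstart : ρ' [] = ρ v) :
    M.Accepting (substAt t r v) (substAt ρ ρ' v) := by
  obtain ⟨hrun, hacc⟩ := hρ
  obtain ⟨hrun', hacc'⟩ := hρ'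
  constructor
  · intro w
    by_cases hw : v <+: w
    · have hw1 : v <+: w ++ [false] := hw.trans (List.prefix_append _ _)
      have hw2 : v <+: w ++ [true] := hw.trans (List.prefix_append _ _)
      have hlen : v.length ≤ w.length := hw.length_le
      have hd : ∀ c : Bool, (w ++ [c]).drop v.length = w.drop v.length ++ [c] := by
        intro c; rw [List.drop_append_of_le_length hlen]
      simp only [substAt, if_pos hw, if_pos hw1, if_pos hw2, hd]
      exact hrun' (w.drop v.length)
    · have key : ∀ c : Bool, substAt ρ ρ' v (w ++ [c]) = ρ (w ++ [c]) := by
        intro c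
        by_cases h2 : v <+: w ++ [c]
        · rcases List.prefix_concat_iff.mp h2 with h3 | h3
          · subst h3; simpa [substAt] using hstart
          · exact absurd h3 hw
        · simp [substAt, if_neg h2]
      simp only [substAt] at key ⊢
      simp only [if_neg hw, key]
      exact hrun w
  · intro b
    by_cases hb : pref b v.length = v
    · have hnp : ∀ n, v.length ≤ n →
          substAt ρ ρ' v (pref b n) = ρ' (pref (fun k => b (k + v.length)) (n - v.length)) := by
        intro n hn
        have hpre : v <+: pref b n := by
          rw [List.prefix_iff_eq_take, pref_take b hn, hb]
        have : pref b n = pref b v.length ++ pref (fun k => b (k + v.length)) (n - v.length) := by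
          rw [← pref_add]; congr 1; omega
        rw [substAt, if_pos hpre, this, hb, List.drop_append_of_le_length (le_refl _)]
        simp
      have : Filter.limsup (fun n => M.Ω (substAt ρ ρ' v (pref b n))) Filter.atTop
          = Filter.limsup (fun n => M.Ω (ρ' (pref (fun k => b (k + v.length)) n))) Filter.atTop := by
        rw [← Filter.limsup_nat_add (fun n => M.Ω (substAt ρ ρ' v (pref b n))) v.length]
        apply Filter.limsup_congr
        filter_upwards with n
        rw [hnp (n + v.length) (Nat.le_add_left _ _)]
        simp
      rw [this]
      exact hacc' _
    · have : ∀ n, substAt ρ ρ' v (pref b n) = ρ (pref b n) := by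
        intro n
        have : ¬ v <+: pref b n := by
          intro h
          have hln : v.length ≤ n := by
            have := h.length_le; rwa [pref_length] at this
          rw [List.prefix_iff_eq_take, pref_take b hln] at h
          exact hb h.symm
        simp [substAt, if_neg this]
      simp only [this]
      exact hacc b
end

section
/- Define a partial run ρ of A on a tree t ∉ L(A) as follows: ρ(ε) = q₀; at a defined vertex v with q = ρ(v), a = t(v), if (q,a) is unproductive, v is a leaf; otherwise extend ρ to v·L and v·R using the unique transition δ starting from (q,a) with t↾_v ∈ C_δ, where the sets C_δ partition all trees among the transitions from (q,a). Then either ρ has a leaf (a vertex where (ρ(v), t(v)) is unproductive), or ρ is a total run of A on t and there exists an infinite branch b with limsup Ω(ρ(b↾_n)) odd. -/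
open Filter Set

noncomputable section
open Classical

/-- Chosen transition at a state `q` and subtree `s`. -/
def pick {Q A : Type} (M : NPA Q A) (C : Q × Q × A × Q → Set (Tree' A))
    (q : Q) (s : Tree' A) : Q × Q × A × Q :=
  if h : ∃ δ : Q × Q × A × Q, M.StartsFrom δ q (s []) ∧ s ∈ C δ then h.choose
  else (q, q, s [], q)

/-- The constructed partial run, as a function of remaining path. -/
def run {Q A : Type} (M : NPA Q A) (C : Q × Q × A × Q → Set (Tree' A)) :
    Q → Tree' A → List Bool → Q
  | q, _, [] => q
  | q, s, b :: v =>
      run M C (if b then (pick M C q s).2.2.2 else (pick M C q s).2.1) (subtreeAt s [b]) v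

lemma subtreeAt_cons {A : Type} (s : Tree' A) (b : Bool) (v : List Bool) :
    subtreeAt (subtreeAt s [b]) v = subtreeAt s (b :: v) := by
  funext w; simp [subtreeAt]

lemma run_snoc {Q A : Type} (M : NPA Q A) (C : Q × Q × A × Q → Set (Tree' A))
    (q : Q) (s : Tree' A) (v : List Bool) (b : Bool) :
    run M C q s (v ++ [b]) =
      (if b then (pick M C (run M C q s v) (subtreeAt s v)).2.2.2
       else (pick M C (run M C q s v) (subtreeAt s v)).2.1) := by
  induction v generalizing q s with
  | nil =>
      have : subtreeAt s ([] : List Bool) = s := by funext w; simp [subtreeAt]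
      simp [run, this]
  | cons c v ih =>
      rw [show (c :: v) ++ [b] = c :: (v ++ [b]) from rfl, run, ih, subtreeAt_cons]
      rfl

end

theorem stmt15 {Q A : Type} [Fintype Q] (M : NPA Q A) (hU : M.Unambiguous)
    (t : Tree' A) (ht : t ∉ M.Lang)
    (C : Q × Q × A × Q → Set (Tree' A))
    (hCdisj : ∀ (q : Q) (a : A), M.Productive q a →
      ∀ δ₁ δ₂ : Q × Q × A × Q, M.StartsFrom δ₁ q a → M.StartsFrom δ₂ q a → δ₁ ≠ δ₂ →
        C δ₁ ∩ C δ₂ = ∅)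
    (hCcover : ∀ (q : Q) (a : A), M.Productive q a →
      ∀ s : Tree' A, ∃ δ : Q × Q × A × Q, M.StartsFrom δ q a ∧ s ∈ C δ) :
    ∃ ρ : Tree' Q, ρ [] = M.q0 ∧
      (∀ v : List Bool, (∀ u : List Bool, u <+: v → M.Productive (ρ u) (t u)) →
        (ρ v, ρ (v ++ [false]), t v, ρ (v ++ [true])) ∈ M.Δ ∧
        subtreeAt t v ∈ C (ρ v, ρ (v ++ [false]), t v, ρ (v ++ [true]))) ∧
      ((∃ v : List Bool, ¬ M.Productive (ρ v) (t v)) ∨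
        (M.IsRun t ρ ∧
          ∃ b : ℕ → Bool,
            Odd (Filter.limsup (fun n => M.Ω (ρ (pref b n))) Filter.atTop))) := by

  classical
  set ρ : Tree' Q := run M C M.q0 t with hρ
  have sub_apply : ∀ v : List Bool, subtreeAt t v [] = t v := by
    intro v; simp [subtreeAt]
  have key : ∀ v : List Bool, M.Productive (ρ v) (t v) →
      (ρ v, ρ (v ++ [false]), t v, ρ (v ++ [true])) ∈ M.Δ ∧
      subtreeAt t v ∈ C (ρ v, ρ (v ++ [false]), t v, ρ (v ++ [true])) := by
    intro v hprod
    have hex : ∃ δ : Q × Q × A × Q,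
        M.StartsFrom δ (ρ v) ((subtreeAt t v) []) ∧ subtreeAt t v ∈ C δ := by
      rw [sub_apply]; exact hCcover _ _ hprod (subtreeAt t v)
    have hpick : pick M C (ρ v) (subtreeAt t v) = hex.choose := by
      simp [pick, hex]
    obtain ⟨⟨hΔ, h1, h2⟩, hC⟩ := hex.choose_spec
    have h2' : hex.choose.2.2.1 = t v := h2.trans (sub_apply v)
    have hfa : ρ (v ++ [false]) = hex.choose.2.1 := by
      show run M C M.q0 t (v ++ [false]) = _
      rw [run_snoc]; exact congrArg (fun d => d.2.1) hpick
    have htr : ρ (v ++ [true]) = hex.choose.2.2.2 := by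
      show run M C M.q0 t (v ++ [true]) = _
      rw [run_snoc]; exact congrArg (fun d => d.2.2.2) hpick
    have heq : (ρ v, ρ (v ++ [false]), t v, ρ (v ++ [true])) = hex.choose := by
      simp [Prod.ext_iff, h1, h2', hfa, htr]
    simpa [heq] using And.intro hΔ hC
  refine ⟨ρ, rfl, fun v hv => key v (hv v List.prefix_rfl), ?_⟩
  by_cases hall : ∀ v : List Bool, M.Productive (ρ v) (t v)
  · right
    have hrun : M.IsRun t ρ := fun v => (key v (hall v)).1
    refine ⟨hrun, ?_⟩
    by_contra hodd
    push_neg at hodd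
    apply ht
    refine ⟨ρ, ⟨hrun, fun b => ?_⟩, rfl⟩
    rcases Nat.even_or_odd (Filter.limsup (fun n => M.Ω (ρ (pref b n))) Filter.atTop) with h | h
    · exact h
    · exact absurd h (hodd b)
  · left; push_neg at hall; exact hall
end
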